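/- If R is commutative, a module M is RD-flat over R if and only if the localization M_P is RD-flat over R_P for every maximal ideal P of R. -/

import Mathlib

universe u

open MulOpposite

section RDDefsComm

variable (R : Type u) [CommRing R]

/-- `IsTensorZeroC R M N l` encodes the statement `∑ mᵢ ⊗ nᵢ = 0` in `M ⊗_R N`
(modules over a commutative ring `R`), via the universal property of the tensor
product: every `R`-balanced biadditive map kills the sum. -/
def IsTensorZeroC (M N : Type u) [AddCommGroup M] [Module R M]
    [AddCommGroup N] [Module R N] (l : List (M × N)) : Prop :=
  ∀ (A : Type u) [AddCommGroup A], ∀ b : M → N → A,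
    (∀ m₁ m₂ n, b (m₁ + m₂) n = b m₁ n + b m₂ n) →
    (∀ m n₁ n₂, b m (n₁ + n₂) = b m n₁ + b m n₂) →
    (∀ (r : R) (m : M) (n : N), b (r • m) n = b m (r • n)) →
    (l.map fun p => b p.1 p.2).sum = 0

/-- An `R`-module `M` (over a commutative ring) is RD-flat if tensoring with `M`
preserves exactness of all RD-exact sequences; equivalently, for every injective
linear map `f : H → F` whose image is a relatively divisible submodule
(`rF ∩ f(H) = r f(H)` for all `r`), the induced map `M ⊗ H → M ⊗ F` is injective. -/
def RDFlatC (M : Type u) [AddCommGroup M] [Module R M] : Prop :=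
  ∀ (H F : Type u) [AddCommGroup H] [Module R H] [AddCommGroup F] [Module R F],
    ∀ f : H →ₗ[R] F, Function.Injective f →
    (∀ (r : R) (h : H) (y : F), f h = r • y → ∃ h' : H, h = r • h') →
    ∀ l : List (M × H),
      IsTensorZeroC R M F (l.map fun p => (p.1, f p.2)) → IsTensorZeroC R M H l

/-- An `R`-module `N` is RD-injective if every homomorphism into `N` from a
relatively divisible submodule of an `R`-module extends to the whole module. -/
def RDInjectiveC (N : Type u) [AddCommGroup N] [Module R N] : Prop :=
  ∀ (K L : Type u) [AddCommGroup K] [Module R K] [AddCommGroup L] [Module R L],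
    ∀ f : K →ₗ[R] L, Function.Injective f →
    (∀ (r : R) (k : K) (y : L), f k = r • y → ∃ k' : K, k = r • k') →
    ∀ g : K →ₗ[R] N, ∃ h : L →ₗ[R] N, h.comp f = g

/-- An injective linear map `f : K → L` of `R`-modules is pure if every finite
system of linear equations with constants in `K` which is solvable in `L` is
solvable in `K`. -/
def IsPureC {K L : Type u} [AddCommGroup K] [Module R K] [AddCommGroup L]
    [Module R L] (f : K →ₗ[R] L) : Prop :=
  ∀ (m n : ℕ) (a : Fin m → Fin n → R) (k : Fin m → K),
    (∃ x : Fin n → L, ∀ i, (∑ j, a i j • x j) = f (k i)) →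
    ∃ y : Fin n → K, ∀ i, (∑ j, a i j • y j) = k i

/-- An `R`-module `M` is RD-coflat if every RD-exact sequence `0 → M → P → Q → 0`
is pure-exact, i.e. whenever `M` embeds as a relatively divisible submodule of a
module `P`, it is a pure submodule of `P`. -/
def RDCoflatC (M : Type u) [AddCommGroup M] [Module R M] : Prop :=
  ∀ (P : Type u) [AddCommGroup P] [Module R P],
    ∀ f : M →ₗ[R] P, Function.Injective f →
    (∀ (r : R) (x : M) (y : P), f x = r • y → ∃ x' : M, x = r • x') →
    IsPureC R f

/-- An `R`-module `F` is RD-projective if every homomorphism from `F` to a quotient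
in an RD-exact sequence (the kernel is a relatively divisible submodule) lifts. -/
def RDProjectiveC (F : Type u) [AddCommGroup F] [Module R F] : Prop :=
  ∀ (L Q : Type u) [AddCommGroup L] [Module R L] [AddCommGroup Q] [Module R Q],
    ∀ p : L →ₗ[R] Q, Function.Surjective p →
    (∀ (r : R) (x : L), p x = 0 → (∃ y : L, x = r • y) →
      ∃ z : L, p z = 0 ∧ x = r • z) →
    ∀ g : F →ₗ[R] Q, ∃ h : F →ₗ[R] L, p.comp h = g

end RDDefsComm


section Aux

open TensorProduct

variable {R : Type u} [CommRing R]

theorem isTensorZeroC_iff {M N : Type u} [AddCommGroup M] [Module R M]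
    [AddCommGroup N] [Module R N] (l : List (M × N)) :
    IsTensorZeroC R M N l ↔ (l.map fun p => p.1 ⊗ₜ[R] p.2).sum = 0 := by
  constructor
  · intro h
    exact h (TensorProduct R M N) (fun m n => m ⊗ₜ n)
      (fun _ _ _ => TensorProduct.add_tmul _ _ _)
      (fun _ _ _ => TensorProduct.tmul_add _ _ _)
      (fun r m n => TensorProduct.smul_tmul r m n)
  · intro h A _ b hb1 hb2 hb3
    have hb0r : ∀ m, b m 0 = 0 := fun m => by
      have h' := hb2 m 0 0
      rw [add_zero] at h'
      exact (left_eq_add.mp h')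
    have hb0l : ∀ n, b 0 n = 0 := fun n => by
      have h' := hb1 0 0 n
      rw [add_zero] at h'
      exact (left_eq_add.mp h')
    let Fm : M →+ N →+ A :=
      { toFun := fun m => { toFun := b m, map_zero' := hb0r m, map_add' := hb2 m }
        map_zero' := AddMonoidHom.ext fun n => hb0l n
        map_add' := fun m₁ m₂ => AddMonoidHom.ext fun n => hb1 m₁ m₂ n }
    let g : M ⊗[R] N →+ A := TensorProduct.liftAddHom Fm (fun r m n => hb3 r m n)
    have key : (l.map fun p => b p.1 p.2).sum = g ((l.map fun p => p.1 ⊗ₜ[R] p.2).sum) := by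
      rw [map_list_sum, List.map_map]
      rfl
    rw [key, h, map_zero]

theorem exists_list_tmul {M N : Type u} [AddCommGroup M] [Module R M]
    [AddCommGroup N] [Module R N] (x : M ⊗[R] N) :
    ∃ l : List (M × N), x = (l.map fun p => p.1 ⊗ₜ[R] p.2).sum := by
  refine TensorProduct.induction_on x ⟨[], rfl⟩ (fun m n => ⟨[(m, n)], by simp⟩) ?_
  rintro x y ⟨l₁, rfl⟩ ⟨l₂, rfl⟩
  exact ⟨l₁ ++ l₂, by rw [List.map_append, List.sum_append]⟩

theorem rdFlatC_iff (M : Type u) [AddCommGroup M] [Module R M] :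
    RDFlatC R M ↔
      ∀ (H F : Type u) [AddCommGroup H] [Module R H] [AddCommGroup F] [Module R F]
        (f : H →ₗ[R] F), Function.Injective f →
        (∀ (r : R) (h : H) (y : F), f h = r • y → ∃ h' : H, h = r • h') →
        Function.Injective (LinearMap.lTensor M f) := by
  have key : ∀ (H F : Type u) [AddCommGroup H] [Module R H] [AddCommGroup F] [Module R F]
      (f : H →ₗ[R] F) (l : List (M × H)),
      LinearMap.lTensor M f ((l.map fun p => p.1 ⊗ₜ[R] p.2).sum)
        = ((l.map fun p => (p.1, f p.2)).map fun p => p.1 ⊗ₜ[R] p.2).sum := by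
    intro H F _ _ _ _ f l
    rw [map_list_sum, List.map_map, List.map_map]
    congr 1
  constructor
  · intro h H F _ _ _ _ f hinj hrd
    rw [injective_iff_map_eq_zero]
    intro x hx
    obtain ⟨l, rfl⟩ := exists_list_tmul x
    have h0 : IsTensorZeroC R M F (l.map fun p => (p.1, f p.2)) := by
      rw [isTensorZeroC_iff, ← key]
      exact hx
    have h1 := h H F f hinj hrd l h0
    rwa [isTensorZeroC_iff] at h1
  · intro h H F _ _ _ _ f hinj hrd l hl
    rw [isTensorZeroC_iff] at hl ⊢
    apply h H F f hinj hrd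
    rw [map_zero, key, hl]

theorem rTensor_injective_of_lTensor_injective {M H F : Type u} [AddCommGroup M] [Module R M]
    [AddCommGroup H] [Module R H] [AddCommGroup F] [Module R F] (f : H →ₗ[R] F)
    (h : Function.Injective (LinearMap.lTensor M f)) :
    Function.Injective (LinearMap.rTensor M f) := by
  have key : ∀ z : H ⊗[R] M, LinearMap.rTensor M f z
      = TensorProduct.comm R M F (LinearMap.lTensor M f ((TensorProduct.comm R M H).symm z)) := by
    intro z
    refine TensorProduct.induction_on z (by simp) (fun a m => by simp) ?_
    intro a b ha hb
    simp only [map_add, ha, hb]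
  intro x y hxy
  rw [key x, key y] at hxy
  exact (TensorProduct.comm R M H).symm.injective (h ((TensorProduct.comm R M F).injective hxy))

end Aux

open TensorProduct LocalizedModule in
private theorem fwd (R : Type u) [CommRing R] (M : Type u) [AddCommGroup M] [Module R M]
    (hM : RDFlatC R M) (P : Ideal R) (hP : P.IsMaximal) :
    letI := hP.isPrime
    RDFlatC (Localization.AtPrime P) (LocalizedModule P.primeCompl M) := by
  letI := hP.isPrime
  set S := P.primeCompl with hS
  set A := Localization.AtPrime P with hA
  show RDFlatC A (LocalizedModule S M)
  rw [rdFlatC_iff]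
  intro H F _ _ _ _ f hinj hrd
  letI : Module R H := Module.compHom H (algebraMap R A)
  letI : Module R F := Module.compHom F (algebraMap R A)
  haveI : IsScalarTower R A H := ⟨fun r a h => by rw [Algebra.smul_def, mul_smul]; rfl⟩
  haveI : IsScalarTower R A F := ⟨fun r a h => by rw [Algebra.smul_def, mul_smul]; rfl⟩
  let g := f.restrictScalars R
  have ginj : Function.Injective g := hinj
  have grd : ∀ (r : R) (h : H) (y : F), g h = r • y → ∃ h' : H, h = r • h' := by
    intro r h y hy
    obtain ⟨h', hh'⟩ := hrd (algebraMap R A r) h y hy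
    exact ⟨h', hh'⟩
  have hL : Function.Injective (LinearMap.lTensor M g) := (rdFlatC_iff M).mp hM H F g ginj grd
  have hR : Function.Injective (LinearMap.rTensor M g) :=
    rTensor_injective_of_lTensor_injective g hL
  let e := (IsLocalizedModule.isBaseChange S A (LocalizedModule.mkLinearMap S M)).equiv
  let ΘH : (LocalizedModule S M) ⊗[A] H ≃ₗ[A] H ⊗[R] M :=
    TensorProduct.comm A _ H ≪≫ₗ TensorProduct.congr (LinearEquiv.refl A H) e.symm ≪≫ₗ
      TensorProduct.AlgebraTensorModule.cancelBaseChange R A A H M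
  let ΘF : (LocalizedModule S M) ⊗[A] F ≃ₗ[A] F ⊗[R] M :=
    TensorProduct.comm A _ F ≪≫ₗ TensorProduct.congr (LinearEquiv.refl A F) e.symm ≪≫ₗ
      TensorProduct.AlgebraTensorModule.cancelBaseChange R A A F M
  have key : ∀ (w : A ⊗[R] M) (hh : H),
      LinearMap.rTensor M g
          (TensorProduct.AlgebraTensorModule.cancelBaseChange R A A H M (hh ⊗ₜ w))
        = TensorProduct.AlgebraTensorModule.cancelBaseChange R A A F M (f hh ⊗ₜ w) := by
    intro w hh
    refine TensorProduct.induction_on w ?_ ?_ ?_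
    · simp [TensorProduct.tmul_zero]
    · intro a m
      simp only [TensorProduct.AlgebraTensorModule.cancelBaseChange_tmul,
        LinearMap.rTensor_tmul]
      rw [show g (a • hh) = a • f hh from f.map_smul a hh]
    · intro x y hx hy
      simp only [TensorProduct.tmul_add, map_add, hx, hy]
  have square : ∀ z : (LocalizedModule S M) ⊗[A] H,
      ΘF (LinearMap.lTensor (LocalizedModule S M) f z) = LinearMap.rTensor M g (ΘH z) := by
    intro z
    refine TensorProduct.induction_on z (by simp) ?_ ?_
    · intro x hh
      have hΘH : ΘH (x ⊗ₜ hh)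
          = TensorProduct.AlgebraTensorModule.cancelBaseChange R A A H M (hh ⊗ₜ (e.symm x)) := by
        simp only [ΘH, LinearEquiv.trans_apply, TensorProduct.comm_tmul,
          TensorProduct.congr_tmul, LinearEquiv.refl_apply]
      have hΘF : ΘF (LinearMap.lTensor (LocalizedModule S M) f (x ⊗ₜ hh))
          = TensorProduct.AlgebraTensorModule.cancelBaseChange R A A F M
              (f hh ⊗ₜ (e.symm x)) := by
        simp only [LinearMap.lTensor_tmul, ΘF, LinearEquiv.trans_apply,
          TensorProduct.comm_tmul, TensorProduct.congr_tmul, LinearEquiv.refl_apply]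
      rw [hΘH, hΘF, key]
    · intro a b ha hb
      simp only [map_add, ha, hb]
  intro x y hxy
  have h2 : LinearMap.rTensor M g (ΘH x) = LinearMap.rTensor M g (ΘH y) := by
    rw [← square, ← square, hxy]
  exact ΘH.injective (hR h2)

open TensorProduct LocalizedModule in
private theorem bwd (R : Type u) [CommRing R] (M : Type u) [AddCommGroup M] [Module R M]
    (hloc : ∀ (P : Ideal R) (hP : P.IsMaximal),
        letI := hP.isPrime
        RDFlatC (Localization.AtPrime P) (LocalizedModule P.primeCompl M)) :
    RDFlatC R M := by
  rw [rdFlatC_iff]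
  intro H F _ _ _ _ f hinj hrd
  rw [injective_iff_map_eq_zero]
  intro t ht
  have main : ∀ (P : Ideal R) (hP : P.IsMaximal),
      letI := hP.isPrime
      ∃ s : P.primeCompl, (s : R) • t = 0 := by
    intro P hP
    letI := hP.isPrime
    set S := P.primeCompl with hS
    set A := Localization.AtPrime P with hA
    have hflatM := hloc P hP
    rw [rdFlatC_iff] at hflatM
    let bM := IsLocalizedModule.isBaseChange S A (LocalizedModule.mkLinearMap S M)
    let bH := IsLocalizedModule.isBaseChange S A (LocalizedModule.mkLinearMap S H)
    let bF := IsLocalizedModule.isBaseChange S A (LocalizedModule.mkLinearMap S F)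
    let bMH := IsLocalizedModule.isBaseChange S A (LocalizedModule.mkLinearMap S (M ⊗[R] H))
    let bMF := IsLocalizedModule.isBaseChange S A (LocalizedModule.mkLinearMap S (M ⊗[R] F))
    let fP : LocalizedModule S H →ₗ[A] LocalizedModule S F :=
      bF.equiv.toLinearMap ∘ₗ (f.baseChange A) ∘ₗ bH.equiv.symm.toLinearMap
    have fP_apply : ∀ x, fP x = bF.equiv (f.baseChange A (bH.equiv.symm x)) := fun x => rfl
    have fP_mk : ∀ (h : H) (u : S), fP (LocalizedModule.mk h u) = LocalizedModule.mk (f h) u := by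
      intro h u
      have h1 : bH.equiv.symm (LocalizedModule.mk h u) = Localization.mk 1 u ⊗ₜ[R] h := by
        rw [LinearEquiv.symm_apply_eq, bH.equiv_tmul]
        show LocalizedModule.mk h u = Localization.mk 1 u • LocalizedModule.mk h 1
        rw [LocalizedModule.mk_smul_mk, one_smul, mul_one]
      rw [fP_apply, h1, LinearMap.baseChange_tmul, bF.equiv_tmul]
      show Localization.mk 1 u • LocalizedModule.mk (f h) 1 = _
      rw [LocalizedModule.mk_smul_mk, one_smul, mul_one]
    have fPinj : Function.Injective fP := by
      have hbc : Function.Injective (f.baseChange A) := by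
        rw [show (⇑(f.baseChange A) : A ⊗[R] H → A ⊗[R] F) = ⇑(f.lTensor A) from
          LinearMap.baseChange_eq_ltensor f]
        exact Module.Flat.lTensor_preserves_injective_linearMap f hinj
      intro x y hxy
      exact bH.equiv.symm.injective (hbc (bF.equiv.injective hxy))
    have fPrd : ∀ (ρ : A) (x : LocalizedModule S H) (y : LocalizedModule S F),
        fP x = ρ • y → ∃ x', x = ρ • x' := by
      intro ρ x y
      induction ρ using Localization.induction_on with
      | H rs =>
        obtain ⟨r, s⟩ := rs
        induction x using LocalizedModule.induction_on with
        | h h u =>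
          induction y using LocalizedModule.induction_on with
          | h y0 v =>
            intro hxy
            rw [fP_mk, LocalizedModule.mk_smul_mk] at hxy
            obtain ⟨c, hc⟩ := LocalizedModule.mk_eq.mp hxy
            simp only [Submonoid.smul_def, Submonoid.coe_mul, smul_smul] at hc
            rw [← map_smul] at hc
            have hy' : f (((c : R) * ((s : R) * (v : R))) • h) = r • (((c : R) * (u : R)) • y0) := by
              rw [hc, smul_smul]
              congr 1
              ring
            obtain ⟨h', hh'⟩ := hrd r _ _ hy'
            refine ⟨LocalizedModule.mk h' (c * v * u), ?_⟩
            rw [LocalizedModule.mk_smul_mk, ← hh', LocalizedModule.mk_eq]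
            refine ⟨1, ?_⟩
            simp only [Submonoid.smul_def, Submonoid.coe_mul, smul_smul, OneMemClass.coe_one,
              one_mul]
            congr 1
            ring
    have hTinj : Function.Injective (LinearMap.lTensor (LocalizedModule S M) fP) :=
      hflatM _ _ fP fPinj fPrd
    let step2H := TensorProduct.AlgebraTensorModule.assoc R R A A M H
    let step3H := TensorProduct.AlgebraTensorModule.cancelBaseChange R A A (A ⊗[R] M) H
    let step2F := TensorProduct.AlgebraTensorModule.assoc R R A A M F
    let step3F := TensorProduct.AlgebraTensorModule.cancelBaseChange R A A (A ⊗[R] M) F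
    let χH : LocalizedModule S (M ⊗[R] H) ≃ₗ[A] (LocalizedModule S M) ⊗[A] (LocalizedModule S H) :=
      bMH.equiv.symm ≪≫ₗ step2H.symm ≪≫ₗ step3H.symm ≪≫ₗ TensorProduct.congr bM.equiv bH.equiv
    let χF : LocalizedModule S (M ⊗[R] F) ≃ₗ[A] (LocalizedModule S M) ⊗[A] (LocalizedModule S F) :=
      bMF.equiv.symm ≪≫ₗ step2F.symm ≪≫ₗ step3F.symm ≪≫ₗ TensorProduct.congr bM.equiv bF.equiv
    have χH_mk : ∀ (m : M) (h : H), χH (LocalizedModule.mk (m ⊗ₜ[R] h) 1)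
        = LocalizedModule.mk m 1 ⊗ₜ[A] LocalizedModule.mk h 1 := by
      intro m h
      have h0 : bMH.equiv.symm (LocalizedModule.mk (m ⊗ₜ[R] h) 1) = (1 : A) ⊗ₜ (m ⊗ₜ[R] h) :=
        bMH.equiv_symm_apply (m ⊗ₜ[R] h)
      show TensorProduct.congr bM.equiv bH.equiv (step3H.symm (step2H.symm (bMH.equiv.symm
        (LocalizedModule.mk (m ⊗ₜ[R] h) 1)))) = _
      rw [h0, TensorProduct.AlgebraTensorModule.assoc_symm_tmul,
        TensorProduct.AlgebraTensorModule.cancelBaseChange_symm_tmul, TensorProduct.congr_tmul,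
        bM.equiv_tmul, bH.equiv_tmul, one_smul, one_smul]
      rfl
    have χF_mk : ∀ (m : M) (y : F), χF (LocalizedModule.mk (m ⊗ₜ[R] y) 1)
        = LocalizedModule.mk m 1 ⊗ₜ[A] LocalizedModule.mk y 1 := by
      intro m y
      have h0 : bMF.equiv.symm (LocalizedModule.mk (m ⊗ₜ[R] y) 1) = (1 : A) ⊗ₜ (m ⊗ₜ[R] y) :=
        bMF.equiv_symm_apply (m ⊗ₜ[R] y)
      show TensorProduct.congr bM.equiv bF.equiv (step3F.symm (step2F.symm (bMF.equiv.symm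
        (LocalizedModule.mk (m ⊗ₜ[R] y) 1)))) = _
      rw [h0, TensorProduct.AlgebraTensorModule.assoc_symm_tmul,
        TensorProduct.AlgebraTensorModule.cancelBaseChange_symm_tmul, TensorProduct.congr_tmul,
        bM.equiv_tmul, bF.equiv_tmul, one_smul, one_smul]
      rfl
    have square : ∀ x : M ⊗[R] H,
        LinearMap.lTensor (LocalizedModule S M) fP (χH (LocalizedModule.mkLinearMap S _ x))
          = χF (LocalizedModule.mkLinearMap S _ (LinearMap.lTensor M f x)) := by
      intro x
      refine TensorProduct.induction_on x ?_ ?_ ?_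
      · simp only [map_zero]
      · intro m h
        show LinearMap.lTensor (LocalizedModule S M) fP (χH (LocalizedModule.mk (m ⊗ₜ[R] h) 1))
          = χF (LocalizedModule.mkLinearMap S _ (LinearMap.lTensor M f (m ⊗ₜ[R] h)))
        rw [χH_mk, LinearMap.lTensor_tmul, fP_mk, LinearMap.lTensor_tmul]
        show _ = χF (LocalizedModule.mk (m ⊗ₜ[R] f h) 1)
        rw [χF_mk]
      · intro a b ha hb
        simp only [map_add, ha, hb]
    have h1 : LinearMap.lTensor (LocalizedModule S M) fP (χH (LocalizedModule.mk t 1)) = 0 := by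
      have := square t
      rw [ht] at this
      show LinearMap.lTensor (LocalizedModule S M) fP (χH (LocalizedModule.mkLinearMap S _ t)) = 0
      rw [this, map_zero, map_zero]
    have h2 : χH (LocalizedModule.mk t 1) = 0 := by
      apply hTinj
      rw [h1, map_zero]
    have h3 : (LocalizedModule.mk t 1 : LocalizedModule S (M ⊗[R] H)) = 0 := by
      apply χH.injective
      rw [h2, map_zero]
    rw [show (0 : LocalizedModule S (M ⊗[R] H)) = LocalizedModule.mk 0 1 from
      (LocalizedModule.zero_mk 1).symm, LocalizedModule.mk_eq] at h3
    obtain ⟨c, hc⟩ := h3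
    refine ⟨c, ?_⟩
    simpa [Submonoid.smul_def] using hc
  have htop : Ideal.torsionOf R (M ⊗[R] H) t = ⊤ := by
    by_contra hne
    obtain ⟨P, hPmax, hle⟩ := Ideal.exists_le_maximal _ hne
    obtain ⟨s, hs⟩ := main P hPmax
    have hmem : (s : R) ∈ Ideal.torsionOf R (M ⊗[R] H) t := hs
    exact s.2 (hle hmem)
  exact (Ideal.torsionOf_eq_top_iff R t).mp htop

/-- Over a commutative ring `R`, a module `M` is RD-flat if and only if the
localization `M_P` is RD-flat over `R_P` for every maximal ideal `P` of `R`. -/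
theorem rdFlat_iff_localized_rdFlat (R : Type u) [CommRing R]
    (M : Type u) [AddCommGroup M] [Module R M] :
    RDFlatC R M ↔
      ∀ (P : Ideal R) (hP : P.IsMaximal),
        letI := hP.isPrime
        RDFlatC (Localization.AtPrime P) (LocalizedModule P.primeCompl M) :=
  ⟨fun hM P hP => fwd R M hM P hP, fun h => bwd R M h⟩
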